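/- Let G be a regular tournament of size n with normal adjacency matrix A whose characteristic polynomial is P_A(x) = -(x - (n-1)/2)(x² + x + (n+1)/4)^{(n-1)/2} (i.e., G is doubly regular). Then the characteristic polynomial of the Seidel matrix S = i(A - Aᵀ) is P_S(x) = -x(x² - n)^{(n-1)/2}; in particular S has eigenvalues √n, 0, -√n with multiplicities (n-1)/2, 1, (n-1)/2. -/

import Mathlib

open Matrix Polynomial

noncomputable section

def IsTournament {n : ℕ} (A : Matrix (Fin n) (Fin n) ℝ) : Prop :=
  (∀ i j, A i j = 0 ∨ A i j = 1) ∧ (∀ i, A i i = 0) ∧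
    A + Aᵀ = (Matrix.of fun _ _ => (1:ℝ)) - 1

def Seidel {n : ℕ} (A : Matrix (Fin n) (Fin n) ℝ) : Matrix (Fin n) (Fin n) ℂ :=
  Complex.I • ((A - Aᵀ).map Complex.ofReal)

def IsDoublyRegular {n : ℕ} (A : Matrix (Fin n) (Fin n) ℝ) : Prop :=
  A.mulVec (fun _ => 1) = (fun _ => ((n : ℝ) - 1) / 2) ∧
  A * Aᵀ = (((n : ℝ) + 1) / 4) • 1 + (((n : ℝ) - 3) / 4) • Matrix.of fun _ _ => 1

lemma trace_sq_zero {n : ℕ} (M : Matrix (Fin n) (Fin n) ℝ)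
    (hsymm : Mᵀ = M) (h : Matrix.trace (M * M) = 0) : M = 0 := by
  have hsum : ∑ i, ∑ j, (M i j)^2 = 0 := by
    have : Matrix.trace (M * M) = ∑ i, ∑ j, M i j * M j i := by
      simp [Matrix.trace, Matrix.mul_apply, Matrix.diag]
    rw [this] at h
    rw [← h]
    refine Finset.sum_congr rfl fun i _ => Finset.sum_congr rfl fun j _ => ?_
    have : M j i = M i j := congrFun (congrFun hsymm i) j
    rw [this, sq]
  ext i j
  have h1 : ∀ i ∈ Finset.univ, ∑ j, (M i j)^2 = 0 := by
    refine (Finset.sum_eq_zero_iff_of_nonneg (fun i _ => Finset.sum_nonneg fun j _ => sq_nonneg (M i j))).mp ?_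
    exact hsum
  have h2 := (Finset.sum_eq_zero_iff_of_nonneg (fun j _ => sq_nonneg (M i j))).mp
    (h1 i (Finset.mem_univ i)) j (Finset.mem_univ j)
  simpa using pow_eq_zero_iff (n := 2) (by norm_num) |>.mp h2

lemma pow_cancel {n : ℕ} (B : Matrix (Fin n) (Fin n) ℝ) (hB : Bᵀ = B) (e : ℝ) :
    ∀ m : ℕ, B^(m+1) * (B - e•1) = 0 → B * (B - e•1) = 0 := by
  intro m
  induction m with
  | zero => intro h; simpa using h
  | succ m ih =>
    intro h
    apply ih
    set D := B - e • (1 : Matrix (Fin n) (Fin n) ℝ) with hD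
    have hDt : Dᵀ = D := by
      rw [hD, Matrix.transpose_sub, hB, Matrix.transpose_smul, Matrix.transpose_one]
    have hcomm : Commute B D := by
      show B * D = D * B
      rw [hD]; rw [Matrix.mul_sub, Matrix.sub_mul]; simp [Matrix.mul_smul, Matrix.smul_mul]
    have hcommp : ∀ j : ℕ, B^j * D = D * B^j := fun j => (hcomm.pow_left j).eq
    set E := B^(m+1) * D with hE
    have hEt : Eᵀ = E := by
      rw [hE, Matrix.transpose_mul, hDt, Matrix.transpose_pow, hB, ← hcommp]
    have hEE : E * E = 0 := by
      have : E * E = B^m * (B^(m+2) * D) * D := by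
        rw [hE]
        calc B^(m+1) * D * (B^(m+1) * D) = B^(m+1) * (D * B^(m+1)) * D := by
              noncomm_ring
          _ = B^(m+1) * (B^(m+1) * D) * D := by rw [hcommp]
          _ = B^(m+1) * B^(m+1) * D * D := by rw [← Matrix.mul_assoc]
          _ = B^m * B^(m+2) * D * D := by rw [← pow_add, ← pow_add]; ring_nf
          _ = B^m * (B^(m+2) * D) * D := by rw [Matrix.mul_assoc (B^m) (B^(m+2)) D]
      rw [this, h, Matrix.mul_zero, Matrix.zero_mul]
    have : E = 0 := trace_sq_zero E hEt (by rw [hEE, Matrix.trace_zero])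
    rw [hE] at this; exact this


lemma det_smul_one_add_allOnes {n : ℕ} (z : ℂ) (hn : n ≠ 0) :
    det ((z • 1 + Matrix.of fun _ _ => (1:ℂ)) : Matrix (Fin n) (Fin n) ℂ) = z^(n-1) * (z + n) := by
  rcases eq_or_ne z 0 with hz | hz
  · subst hz
    simp only [zero_smul, zero_add]
    rcases Nat.lt_or_ge n 2 with h2 | h2
    · interval_cases n
      · omega
      · simp [Matrix.det_fin_one]
    · rw [Matrix.det_zero_of_row_eq (i := ⟨0, by omega⟩) (j := ⟨1, by omega⟩)
        (by simp [Fin.ext_iff]) rfl]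
      rw [zero_pow (by omega), zero_mul]
  · have key : (z • 1 + Matrix.of fun _ _ => (1:ℂ) : Matrix (Fin n) (Fin n) ℂ)
        = z • (1 + Matrix.replicateCol Unit (fun _ => z⁻¹) * Matrix.replicateRow Unit (fun _ => (1:ℂ))) := by
      rw [smul_add]
      congr 1
      ext i j
      simp [Matrix.mul_apply, Matrix.replicateCol, Matrix.replicateRow, mul_comm, hz]
    rw [key, Matrix.det_smul, Matrix.det_one_add_replicateCol_mul_replicateRow]
    have : (fun _ : Fin n => (1:ℂ)) ⬝ᵥ (fun _ => z⁻¹) = n * z⁻¹ := by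
      simp [dotProduct]
    rw [this]
    rw [Fintype.card_fin]
    have hzn : z ^ n = z ^ (n-1) * z := by
      conv_lhs => rw [show n = (n-1) + 1 by omega]
      rw [pow_succ]
    rw [hzn]
    field_simp

set_option maxHeartbeats 2000000 in
theorem seidel_charpoly_of_doubly_regular {n : ℕ} (hmod : n % 4 = 3)
    (A : Matrix (Fin n) (Fin n) ℝ) (hA : IsTournament A)
    (hreg : A.mulVec (fun _ => 1) = (fun _ => ((n : ℝ) - 1) / 2))
    (hnormal : A * Aᵀ = Aᵀ * A)
    (hchar : A.charpoly = (X - C (((n : ℝ) - 1) / 2)) *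
        (X ^ 2 + X + C (((n : ℝ) + 1) / 4)) ^ ((n - 1) / 2)) :
    (Seidel A).charpoly = X * (X ^ 2 - C (n : ℂ)) ^ ((n - 1) / 2) ∧
    (Seidel A).charpoly.rootMultiplicity (Real.sqrt n : ℂ) = (n - 1) / 2 ∧
    (Seidel A).charpoly.rootMultiplicity 0 = 1 ∧
    (Seidel A).charpoly.rootMultiplicity (-(Real.sqrt n : ℂ)) = (n - 1) / 2 := by
  obtain ⟨hA1, hA2, hA3⟩ := hA
  replace hA : (∀ i j, A i j = 0 ∨ A i j = 1) ∧ (∀ i, A i i = 0) ∧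
      A + Aᵀ = (Matrix.of fun _ _ => (1:ℝ)) - 1 := ⟨hA1, hA2, hA3⟩
  have hn3 : 3 ≤ n := by omega
  set J : Matrix (Fin n) (Fin n) ℝ := Matrix.of fun _ _ => 1 with hJdef
  set c : ℝ := ((n : ℝ) - 1) / 2 with hc
  set d : ℝ := ((n : ℝ) + 1) / 4 with hd
  have hAT : Aᵀ = J - 1 - A := by
    rw [← hA.2.2]; abel
  -- row sums
  have hAJ : A * J = c • J := by
    ext i j
    have := congrFun hreg i
    simp only [Matrix.mulVec, dotProduct, mul_one] at this
    simp [Matrix.mul_apply, hJdef, this, hc]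
  have hJJ : J * J = (n : ℝ) • J := by
    ext i j
    simp [Matrix.mul_apply, hJdef]
  -- column sums
  have hJA : J * A = c • J := by
    have h1 : J * Aᵀ = c • J := by
      ext i j
      have := congrFun hreg j
      simp only [Matrix.mulVec, dotProduct, mul_one] at this
      simp only [Matrix.mul_apply, hJdef, Matrix.of_apply, Matrix.smul_apply, one_mul,
        Matrix.transpose_apply, smul_eq_mul, mul_one]
      exact this
    have h2 : J * (J - 1 - A) = c • J := by rw [← hAT]; exact h1
    rw [Matrix.mul_sub, Matrix.mul_sub, hJJ, Matrix.mul_one] at h2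
    have : J * A = (n:ℝ) • J - J - c • J := by
      rw [← h2]; abel
    rw [this, hc]
    push_cast
    match_scalars <;> field_simp <;> ring
  set k : ℕ := (n - 1) / 2 with hk
  have hk1 : 1 ≤ k := by omega
  set B : Matrix (Fin n) (Fin n) ℝ := A * A + A + d • 1 with hB
  -- B is symmetric
  have hBt : Bᵀ = B := by
    rw [hB, Matrix.transpose_add, Matrix.transpose_add, Matrix.transpose_mul,
      Matrix.transpose_smul, Matrix.transpose_one, hAT]
    have expand : (J - 1 - A) * (J - 1 - A) =
        J*J - J - J*A - J + 1 + A - A*J + A + A*A := by noncomm_ring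
    rw [expand, hJJ, hJA, hAJ, hc, hd]
    match_scalars <;> field_simp <;> ring
  -- Cayley-Hamilton
  have hCH : (A - c • 1) * B ^ k = 0 := by
    have h0 := Matrix.aeval_self_charpoly A
    rw [hchar] at h0
    simpa only [_root_.map_mul, map_pow, _root_.map_add, map_sub, aeval_X, aeval_C, sq,
      Algebra.algebraMap_eq_smul_one, hB, hc, hd, hk] using h0
  have hABk : A * B ^ k = c • B ^ k := by
    have := hCH
    rw [Matrix.sub_mul, Matrix.smul_mul, Matrix.one_mul, sub_eq_zero] at this
    exact this
  set e : ℝ := c^2 + c + d with he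
  have hAAB : A * A * B ^ k = (c*c) • B ^ k := by
    rw [Matrix.mul_assoc, hABk, Matrix.mul_smul, hABk, smul_smul]
  have hBk1 : B ^ (k+1) = e • B ^ k := by
    calc B^(k+1) = B * B^k := pow_succ' B k
      _ = (A*A)*B^k + A*B^k + (d•1)*B^k := by rw [hB]; noncomm_ring
      _ = e • B^k := by rw [hAAB, hABk, Matrix.smul_mul, Matrix.one_mul, he]; module
  -- B^2 = e B
  have hB2 : B * B = e • B := by
    have h1 : B^((k-1)+1) * (B - e • 1) = 0 := by
      have : k - 1 + 1 = k := by omega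
      rw [this, Matrix.mul_sub, Matrix.mul_smul, Matrix.mul_one, ← pow_succ, hBk1, sub_self]
    have h2 := pow_cancel B hBt e (k-1) h1
    rw [Matrix.mul_sub, Matrix.mul_smul, Matrix.mul_one, sub_eq_zero] at h2
    exact h2
  -- traces
  have htrA : Matrix.trace A = 0 := by
    simp [Matrix.trace, Matrix.diag, hA.2.1]
  have hoff : ∀ i j : Fin n, i ≠ j → A i j + A j i = 1 := by
    intro i j hij
    have := congrFun (congrFun hA.2.2 i) j
    simpa [Matrix.one_apply, hij, hJdef] using this
  have htrA2 : Matrix.trace (A * A) = 0 := by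
    simp only [Matrix.trace, Matrix.diag, Matrix.mul_apply]
    refine Finset.sum_eq_zero fun i _ => Finset.sum_eq_zero fun j _ => ?_
    rcases eq_or_ne i j with rfl | hij
    · rw [hA.2.1 i, zero_mul]
    · rcases hA.1 i j with h | h
      · rw [h, zero_mul]
      · have : A j i = 0 := by have := hoff i j hij; rw [h] at this; linarith
        rw [this, mul_zero]
  have htrJ : Matrix.trace J = (n : ℝ) := by
    simp [Matrix.trace, Matrix.diag, hJdef]
  have htrB : Matrix.trace B = (n:ℝ) * d := by
    rw [hB]
    simp only [Matrix.trace_add, Matrix.trace_smul, htrA2, htrA, Matrix.trace_one]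
    simp [Fintype.card_fin]
    ring
  -- B J = J B = e J
  have hBJ : B * J = e • J := by
    simp only [hB, Matrix.add_mul, Matrix.smul_mul, Matrix.one_mul, Matrix.mul_assoc, hAJ,
      Matrix.mul_smul, smul_smul]
    match_scalars
    rw [he]; ring
  have hJB : J * B = e • J := by
    simp only [hB, Matrix.mul_add, ← Matrix.mul_assoc, hJA, Matrix.smul_mul, Matrix.mul_smul,
      Matrix.mul_one, smul_smul]
    match_scalars
    rw [he]; ring
  -- the key identity : B = d J
  have hend : (n:ℝ) * d = e := by rw [hd, he, hc]; field_simp; ring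
  have hkey : B = d • J := by
    have hQt : (B - d • J)ᵀ = B - d • J := by
      rw [Matrix.transpose_sub, hBt, Matrix.transpose_smul]
      congr 1
    have hQ2 : (B - d • J) * (B - d • J) = e • (B - d • J) := by
      simp only [Matrix.sub_mul, Matrix.mul_sub, Matrix.smul_mul, Matrix.mul_smul, hB2, hBJ,
        hJB, hJJ, smul_smul, smul_sub]
      match_scalars
      all_goals simp only [he, hd, hc]
      all_goals field_simp
      all_goals ring
    have hQtr : Matrix.trace (B - d • J) = 0 := by
      rw [Matrix.trace_sub, Matrix.trace_smul, htrB, htrJ]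
      simp [mul_comm]
    have := trace_sq_zero (B - d • J) hQt (by
      rw [hQ2, Matrix.trace_smul, hQtr, smul_zero])
    exact sub_eq_zero.mp this
  have hAA : A * A = d • J - A - d • 1 := by
    have h := hkey; rw [hB] at h; rw [← h]; abel
  set M : Matrix (Fin n) (Fin n) ℝ := A - Aᵀ with hM
  have hMeq : M = A + A + 1 - J := by rw [hM, hAT]; abel
  have hMt : Mᵀ = -M := by
    rw [hM, Matrix.transpose_sub, Matrix.transpose_transpose, neg_sub]
  have hM2 : M * M = J - (n:ℝ) • 1 := by
    rw [hMeq]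
    simp only [Matrix.sub_mul, Matrix.mul_sub, Matrix.add_mul, Matrix.mul_add, Matrix.mul_one,
      Matrix.one_mul, hAA, hAJ, hJA, hJJ]
    match_scalars
    all_goals (try simp only [hd, hc])
    all_goals (try field_simp)
    all_goals ring
  -- complex side
  set Jc : Matrix (Fin n) (Fin n) ℂ := Matrix.of fun _ _ => 1 with hJc
  set S : Matrix (Fin n) (Fin n) ℂ := Seidel A with hS
  have hSM : S = Complex.I • (M.map Complex.ofRealHom) := by
    rw [hS, Seidel, hM]; rfl
  have hSt : Sᵀ = -S := by
    rw [hSM, Matrix.transpose_smul, ← Matrix.transpose_map, hMt]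
    rw [show ((-M).map Complex.ofRealHom) = -(M.map Complex.ofRealHom) from
      by ext i j; simp [Matrix.map_apply]]
    rw [smul_neg]
  have hS2 : S * S = (n:ℂ) • 1 - Jc := by
    rw [hSM, Matrix.smul_mul, Matrix.mul_smul, smul_smul, Complex.I_mul_I]
    rw [← Matrix.map_mul, hM2]
    ext i j
    rcases eq_or_ne i j with rfl | hij
    · simp [Matrix.map_apply, Matrix.one_apply, hJdef, hJc, Matrix.sub_apply]
    · simp [Matrix.map_apply, Matrix.one_apply, hJdef, hJc, Matrix.sub_apply, hij]
  -- charpoly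
  set p : Polynomial ℂ := S.charpoly with hp
  set Nc : Matrix (Fin n) (Fin n) (Polynomial ℂ) := S.map Polynomial.C with hNc
  set Jp : Matrix (Fin n) (Fin n) (Polynomial ℂ) := Matrix.of fun _ _ => 1 with hJp
  have hNt : Ncᵀ = -Nc := by
    rw [hNc, ← Matrix.transpose_map, hSt]
    ext i j; simp [Matrix.map_apply]
  have hcm : S.charmatrix = (X : Polynomial ℂ) • (1 : Matrix (Fin n) (Fin n) (Polynomial ℂ)) - Nc := by
    ext i j
    rcases eq_or_ne i j with rfl | hij
    · simp [Matrix.charmatrix_apply_eq, hNc, Matrix.one_apply, Matrix.map_apply]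
    · simp [Matrix.charmatrix_apply_ne _ _ _ hij, hNc, Matrix.one_apply, hij, Matrix.map_apply]
  have h1 : p = ((X : Polynomial ℂ) • (1 : Matrix (Fin n) (Fin n) (Polynomial ℂ)) - Nc).det := by rw [hp, Matrix.charpoly, hcm]
  have h2 : p = ((X : Polynomial ℂ) • (1 : Matrix (Fin n) (Fin n) (Polynomial ℂ)) + Nc).det := by
    rw [← Matrix.det_transpose ((X : Polynomial ℂ) • (1 : Matrix (Fin n) (Fin n) (Polynomial ℂ)) + Nc), Matrix.transpose_add, Matrix.transpose_smul,
      Matrix.transpose_one, hNt, ← sub_eq_add_neg, h1]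
  have hNN : Nc * Nc = Polynomial.C (n:ℂ) • 1 - Jp := by
    rw [hNc, ← Matrix.map_mul, hS2]
    ext i j
    rcases eq_or_ne i j with rfl | hij
    · simp [Matrix.map_apply, Matrix.one_apply, hJc, hJp, Matrix.sub_apply]
    · simp [Matrix.map_apply, Matrix.one_apply, hJc, hJp, Matrix.sub_apply, hij]
  have hprod : p * p = ((X^2 - Polynomial.C (n:ℂ)) • 1 + Jp).det := by
    have : p * p = ((X : Polynomial ℂ) • (1 : Matrix (Fin n) (Fin n) (Polynomial ℂ)) - Nc).det
        * ((X : Polynomial ℂ) • (1 : Matrix (Fin n) (Fin n) (Polynomial ℂ)) + Nc).det := by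
      rw [← h1, ← h2]
    rw [this, ← Matrix.det_mul]
    congr 1
    simp only [Matrix.sub_mul, Matrix.mul_add, Matrix.smul_mul, Matrix.mul_smul,
      Matrix.one_mul, Matrix.mul_one, smul_smul, hNN, smul_sub]
    match_scalars
    all_goals ring
  have hdet : ((X^2 - Polynomial.C (n:ℂ)) • (1 : Matrix (Fin n) (Fin n) (Polynomial ℂ)) + Jp).det
      = X^2 * (X^2 - Polynomial.C (n:ℂ))^(n-1) := by
    apply Polynomial.funext
    intro z
    have hmapJ : (((X^2 - Polynomial.C (n:ℂ)) • (1 : Matrix (Fin n) (Fin n) (Polynomial ℂ)) + Jp).map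
        (Polynomial.evalRingHom z)) = (z^2 - (n:ℂ)) • 1 + Matrix.of fun _ _ => (1:ℂ) := by
      ext i j
      rcases eq_or_ne i j with rfl | hij
      · simp [Matrix.map_apply, Matrix.one_apply, hJp]
      · simp [Matrix.map_apply, Matrix.one_apply, hij, hJp]
    rw [← Polynomial.coe_evalRingHom, RingHom.map_det, RingHom.mapMatrix_apply, hmapJ,
      det_smul_one_add_allOnes _ (show n ≠ 0 by omega), Polynomial.coe_evalRingHom]
    simp only [Polynomial.eval_mul, Polynomial.eval_pow, Polynomial.eval_sub, Polynomial.eval_X,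
      Polynomial.eval_C]
    ring
  set s : ℂ := ((Real.sqrt n : ℝ) : ℂ) with hsdef
  have hs2 : s^2 = (n:ℂ) := by
    rw [hsdef, ← Complex.ofReal_pow, Real.sq_sqrt (by positivity)]
    norm_cast
  have hs0 : s ≠ 0 := by
    rw [hsdef]
    simp only [ne_eq, Complex.ofReal_eq_zero]
    positivity
  set q : Polynomial ℂ := X * (X^2 - Polynomial.C (n:ℂ))^k with hq
  have hqq : q * q = X^2 * (X^2 - Polynomial.C (n:ℂ))^(n-1) := by
    rw [hq, show X * (X ^ 2 - Polynomial.C (n:ℂ)) ^ k * (X * (X ^ 2 - Polynomial.C (n:ℂ)) ^ k)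
      = X^2 * ((X^2 - Polynomial.C (n:ℂ))^(k+k)) from by rw [pow_add]; ring,
      show k + k = n - 1 by omega]
  have hqmonic : q.Monic := by
    rw [hq]
    exact monic_X.mul ((monic_X_pow_sub_C (n:ℂ) two_ne_zero).pow k)
  have hpmonic : p.Monic := S.charpoly_monic
  have hpq : p = q := by
    have hfac : (p - q) * (p + q) = 0 := by
      have hexp : (p - q) * (p + q) = p * p - q * q := by ring
      rw [hexp, hprod, hdet, hqq, sub_self]
    rcases mul_eq_zero.mp hfac with h | h
    · exact sub_eq_zero.mp h
    · exfalso
      have hneg : p = -q := eq_neg_of_add_eq_zero_left h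
      have h1 : p.leadingCoeff = 1 := hpmonic
      rw [hneg, leadingCoeff_neg, hqmonic.leadingCoeff] at h1
      norm_num at h1
  have hXX : X^2 - Polynomial.C (n:ℂ) = (X - Polynomial.C s) * (X + Polynomial.C s) := by
    rw [← hs2, show Polynomial.C (s^2) = Polynomial.C s * Polynomial.C s from by
      rw [sq, Polynomial.C_mul]]
    ring
  have hfact : p = X * ((X - Polynomial.C s)^k * (X + Polynomial.C s)^k) := by
    rw [hpq, hq, hXX, mul_pow]
  have hXne : (X : Polynomial ℂ) ≠ 0 := X_ne_zero
  have hm1 : ((X - Polynomial.C s)^k : Polynomial ℂ) ≠ 0 := ((monic_X_sub_C s).pow k).ne_zero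
  have hm2 : ((X + Polynomial.C s)^k : Polynomial ℂ) ≠ 0 := by
    have h : (X + Polynomial.C s : Polynomial ℂ) = X - Polynomial.C (-s) := by
      rw [map_neg, sub_neg_eq_add]
    rw [h]
    exact ((monic_X_sub_C (-s)).pow k).ne_zero
  have hsplit : ∀ z : ℂ, p.rootMultiplicity z = (X : Polynomial ℂ).rootMultiplicity z
      + ((X - Polynomial.C s)^k).rootMultiplicity z
      + ((X + Polynomial.C s)^k).rootMultiplicity z := by
    intro z
    rw [hfact, Polynomial.rootMultiplicity_mul (mul_ne_zero hXne (mul_ne_zero hm1 hm2)),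
      Polynomial.rootMultiplicity_mul (mul_ne_zero hm1 hm2), add_assoc]
  have hss : s + s ≠ 0 := fun hcon => hs0 (add_self_eq_zero.mp hcon)
  refine ⟨by simp only [hpq, hq], ?_, ?_, ?_⟩
  · rw [hsplit s, Polynomial.rootMultiplicity_eq_zero (by simp [Polynomial.IsRoot, hs0]),
      Polynomial.rootMultiplicity_X_sub_C_pow,
      Polynomial.rootMultiplicity_eq_zero (show ¬ ((X + Polynomial.C s)^k : Polynomial ℂ).IsRoot s by
        simp only [Polynomial.IsRoot, Polynomial.eval_pow, Polynomial.eval_add,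
          Polynomial.eval_X, Polynomial.eval_C]
        exact pow_ne_zero k hss)]
    omega
  · rw [hsplit 0]
    have e1 : (X : Polynomial ℂ).rootMultiplicity 0 = 1 := by
      rw [show (X : Polynomial ℂ) = X - Polynomial.C 0 from by simp]
      exact Polynomial.rootMultiplicity_X_sub_C_self
    have e2 : ((X - Polynomial.C s)^k).rootMultiplicity 0 = 0 :=
      Polynomial.rootMultiplicity_eq_zero (by
        simp only [Polynomial.IsRoot, Polynomial.eval_pow, Polynomial.eval_sub,
          Polynomial.eval_X, Polynomial.eval_C, zero_sub]
        exact pow_ne_zero k (neg_ne_zero.mpr hs0))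
    have e3 : ((X + Polynomial.C s)^k).rootMultiplicity 0 = 0 :=
      Polynomial.rootMultiplicity_eq_zero (by
        simp only [Polynomial.IsRoot, Polynomial.eval_pow, Polynomial.eval_add,
          Polynomial.eval_X, Polynomial.eval_C, zero_add]
        exact pow_ne_zero k hs0)
    rw [e1, e2, e3]
  · rw [hsplit (-s)]
    have e1 : (X : Polynomial ℂ).rootMultiplicity (-s) = 0 :=
      Polynomial.rootMultiplicity_eq_zero (by simp [Polynomial.IsRoot, hs0])
    have e2 : ((X - Polynomial.C s)^k).rootMultiplicity (-s) = 0 :=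
      Polynomial.rootMultiplicity_eq_zero (by
        simp only [Polynomial.IsRoot, Polynomial.eval_pow, Polynomial.eval_sub,
          Polynomial.eval_X, Polynomial.eval_C]
        refine pow_ne_zero k fun hcon => hss ?_
        linear_combination -hcon)
    have e3 : ((X + Polynomial.C s)^k).rootMultiplicity (-s) = k := by
      rw [show (X + Polynomial.C s : Polynomial ℂ) = X - Polynomial.C (-s) from by
        rw [map_neg, sub_neg_eq_add]]
      exact Polynomial.rootMultiplicity_X_sub_C_pow (-s) k
    rw [e1, e2, e3]
    omega
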